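/- There exists a constant C > 0 such that for every natural number m and every word w over {0,1,2} of length m, the operator norm of E_w (as a linear map on R^3 with the l^1 norm, i.e., the maximum absolute column sum of E_w) is at most C (3/5)^m. -/

import Mathlib

open Matrix BigOperators

/-- The matrix `E_0`. -/
noncomputable def E0 : Matrix (Fin 3) (Fin 3) ℝ :=
  !![47/75, -1/25, -1/25; 14/75, 3/25, -2/25; 14/75, -2/25, 3/25]

/-- The matrix `E_1`. -/
noncomputable def E1 : Matrix (Fin 3) (Fin 3) ℝ :=
  !![3/25, 14/75, -2/25; -1/25, 47/75, -1/25; -2/25, 14/75, 3/25]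

/-- The matrix `E_2`. -/
noncomputable def E2 : Matrix (Fin 3) (Fin 3) ℝ :=
  !![3/25, -2/25, 14/75; -2/25, 3/25, 14/75; -1/25, -1/25, 47/75]

/-- `Emat i` is the matrix `E_i`. -/
noncomputable def Emat : Fin 3 → Matrix (Fin 3) (Fin 3) ℝ := ![E0, E1, E2]

/-- For a word `w = [w₁, ..., wₘ]`, `Eword w = E_{wₘ} * ⋯ * E_{w₁}`
(the empty word giving the identity matrix). -/
noncomputable def Eword (w : List (Fin 3)) : Matrix (Fin 3) (Fin 3) ℝ :=
  ((w.map Emat).reverse).prod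

/-! ### Auxiliary material -/

/-- The maximum absolute column sum (the `ℓ¹` operator norm). -/
noncomputable def colN (M : Matrix (Fin 3) (Fin 3) ℝ) : ℝ :=
  Finset.univ.sup' Finset.univ_nonempty fun j : Fin 3 => ∑ i : Fin 3, |M i j|

lemma col_le_colN (M : Matrix (Fin 3) (Fin 3) ℝ) (j : Fin 3) :
    ∑ i : Fin 3, |M i j| ≤ colN M := by
  rw [colN]
  exact Finset.le_sup' (fun j : Fin 3 => ∑ i : Fin 3, |M i j|) (Finset.mem_univ j)

lemma colN_nonneg (M : Matrix (Fin 3) (Fin 3) ℝ) : 0 ≤ colN M :=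
  le_trans (Finset.sum_nonneg fun _ _ => abs_nonneg _) (col_le_colN M 0)

lemma colN_mul (A B : Matrix (Fin 3) (Fin 3) ℝ) : colN (A * B) ≤ colN A * colN B := by
  rw [colN, Finset.sup'_le_iff]
  intro j _
  calc ∑ i : Fin 3, |(A * B) i j|
      ≤ ∑ i : Fin 3, ∑ k : Fin 3, |A i k| * |B k j| := by
        refine Finset.sum_le_sum fun i _ => ?_
        rw [Matrix.mul_apply]
        exact (Finset.abs_sum_le_sum_abs _ _).trans (le_of_eq (by simp [abs_mul]))
    _ = ∑ k : Fin 3, (∑ i : Fin 3, |A i k|) * |B k j| := by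
        rw [Finset.sum_comm]; simp [Finset.sum_mul]
    _ ≤ ∑ k : Fin 3, colN A * |B k j| :=
        Finset.sum_le_sum fun k _ =>
          mul_le_mul_of_nonneg_right (col_le_colN A k) (abs_nonneg _)
    _ = colN A * ∑ k : Fin 3, |B k j| := by rw [Finset.mul_sum]
    _ ≤ colN A * colN B :=
        mul_le_mul_of_nonneg_left (col_le_colN B j) (colN_nonneg A)

/-- The change-of-basis matrix, with columns `(3,1,1)ᵀ, (1,3,1)ᵀ, (1,1,3)ᵀ`. -/
noncomputable def Pm : Matrix (Fin 3) (Fin 3) ℝ := !![3, 1, 1; 1, 3, 1; 1, 1, 3]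

/-- The inverse of `Pm`. -/
noncomputable def Pinv : Matrix (Fin 3) (Fin 3) ℝ :=
  !![2/5, -1/10, -1/10; -1/10, 2/5, -1/10; -1/10, -1/10, 2/5]

lemma PPinv : Pm * Pinv = 1 := by
  rw [Pm, Pinv]
  norm_num [Matrix.mul_fin_three]
  exact Matrix.one_fin_three.symm

lemma PinvP : Pinv * Pm = 1 := by
  rw [Pm, Pinv]
  norm_num [Matrix.mul_fin_three]
  exact Matrix.one_fin_three.symm

lemma conj0 : Pinv * E0 * Pm = !![3/5, 2/15, 2/15; 0, 2/15, -1/15; 0, -1/15, 2/15] := by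
  rw [Pinv, E0, Pm]; norm_num [Matrix.mul_fin_three]

lemma conj1 : Pinv * E1 * Pm = !![2/15, 0, -1/15; 2/15, 3/5, 2/15; -1/15, 0, 2/15] := by
  rw [Pinv, E1, Pm]; norm_num [Matrix.mul_fin_three]

lemma conj2 : Pinv * E2 * Pm = !![2/15, -1/15, 0; -1/15, 2/15, 0; 2/15, 2/15, 3/5] := by
  rw [Pinv, E2, Pm]; norm_num [Matrix.mul_fin_three]

lemma colN_A0 : colN !![3/5, 2/15, 2/15; 0, 2/15, -1/15; 0, -1/15, 2/15] ≤ 3 / 5 := by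
  rw [colN, Finset.sup'_le_iff]
  intro j _
  fin_cases j <;> simp only [Fin.sum_univ_three] <;>
    norm_num [Matrix.cons_val_two, Matrix.vecHead, Matrix.vecTail, abs_of_nonneg, abs_of_nonpos]

lemma colN_A1 : colN !![2/15, 0, -1/15; 2/15, 3/5, 2/15; -1/15, 0, 2/15] ≤ 3 / 5 := by
  rw [colN, Finset.sup'_le_iff]
  intro j _
  fin_cases j <;> simp only [Fin.sum_univ_three] <;>
    norm_num [Matrix.cons_val_two, Matrix.vecHead, Matrix.vecTail, abs_of_nonneg, abs_of_nonpos]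

lemma colN_A2 : colN !![2/15, -1/15, 0; -1/15, 2/15, 0; 2/15, 2/15, 3/5] ≤ 3 / 5 := by
  rw [colN, Finset.sup'_le_iff]
  intro j _
  fin_cases j <;> simp only [Fin.sum_univ_three] <;>
    norm_num [Matrix.cons_val_two, Matrix.vecHead, Matrix.vecTail, abs_of_nonneg, abs_of_nonpos]

lemma colN_conj (a : Fin 3) : colN (Pinv * Emat a * Pm) ≤ 3 / 5 := by
  fin_cases a
  · show colN (Pinv * E0 * Pm) ≤ 3 / 5
    rw [conj0]; exact colN_A0
  · show colN (Pinv * E1 * Pm) ≤ 3 / 5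
    rw [conj1]; exact colN_A1
  · show colN (Pinv * E2 * Pm) ≤ 3 / 5
    rw [conj2]; exact colN_A2

lemma colN_P : colN Pm ≤ 5 := by
  rw [Pm, colN, Finset.sup'_le_iff]
  intro j _
  fin_cases j <;> simp only [Fin.sum_univ_three] <;>
    norm_num [Matrix.cons_val_two, Matrix.vecHead, Matrix.vecTail, abs_of_nonneg, abs_of_nonpos]

lemma colN_Pinv : colN Pinv ≤ 3 / 5 := by
  rw [Pinv, colN, Finset.sup'_le_iff]
  intro j _
  fin_cases j <;> simp only [Fin.sum_univ_three] <;>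
    norm_num [Matrix.cons_val_two, Matrix.vecHead, Matrix.vecTail, abs_of_nonneg, abs_of_nonpos]

lemma colN_one : colN (1 : Matrix (Fin 3) (Fin 3) ℝ) ≤ 1 := by
  rw [Matrix.one_fin_three, colN, Finset.sup'_le_iff]
  intro j _
  fin_cases j <;> simp only [Fin.sum_univ_three] <;>
    norm_num [Matrix.cons_val_two, Matrix.vecHead, Matrix.vecTail, abs_of_nonneg, abs_of_nonpos]

lemma Eword_cons (a : Fin 3) (t : List (Fin 3)) :
    Eword (a :: t) = Eword t * Emat a := by
  simp [Eword, List.prod_append]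

lemma key (w : List (Fin 3)) :
    colN (Pinv * Eword w * Pm) ≤ (3 / 5 : ℝ) ^ w.length := by
  induction w with
  | nil =>
      have h1 : Pinv * Eword [] * Pm = 1 := by
        simp only [Eword, List.map_nil, List.reverse_nil, List.prod_nil, Matrix.mul_one]
        exact PinvP
      rw [h1]
      simpa using colN_one
  | cons a t ih =>
      have h1 : Pinv * Eword (a :: t) * Pm
          = (Pinv * Eword t * Pm) * (Pinv * Emat a * Pm) := by
        rw [Eword_cons]
        calc Pinv * (Eword t * Emat a) * Pm
            = Pinv * Eword t * (Pm * Pinv) * Emat a * Pm := by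
              rw [PPinv]; noncomm_ring
          _ = (Pinv * Eword t * Pm) * (Pinv * Emat a * Pm) := by noncomm_ring
      rw [h1, List.length_cons, pow_succ]
      calc colN ((Pinv * Eword t * Pm) * (Pinv * Emat a * Pm))
          ≤ colN (Pinv * Eword t * Pm) * colN (Pinv * Emat a * Pm) := colN_mul _ _
        _ ≤ (3 / 5 : ℝ) ^ t.length * (3 / 5) :=
            mul_le_mul ih (colN_conj a) (colN_nonneg _) (by positivity)

/-- There is a constant `C > 0` such that for every word `w` over `{0,1,2}` of length `m`,
the operator norm of `E_w` on `ℝ³` with the `ℓ¹` norm — i.e. the maximum absolute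
column sum of `E_w` — is at most `C (3/5)^m`. -/
theorem stmt_9 : ∃ C : ℝ, 0 < C ∧ ∀ w : List (Fin 3),
    (Finset.univ.sup' Finset.univ_nonempty fun j : Fin 3 => ∑ i : Fin 3, |Eword w i j|)
      ≤ C * (3 / 5 : ℝ) ^ w.length := by
  refine ⟨3, by norm_num, fun w => ?_⟩
  have hE : Eword w = Pm * (Pinv * Eword w * Pm) * Pinv := by
    calc Eword w = (Pm * Pinv) * Eword w * (Pm * Pinv) := by rw [PPinv]; simp
      _ = Pm * (Pinv * Eword w * Pm) * Pinv := by noncomm_ring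
  show colN (Eword w) ≤ 3 * (3 / 5 : ℝ) ^ w.length
  rw [hE]
  calc colN (Pm * (Pinv * Eword w * Pm) * Pinv)
      ≤ colN (Pm * (Pinv * Eword w * Pm)) * colN Pinv := colN_mul _ _
    _ ≤ colN Pm * colN (Pinv * Eword w * Pm) * colN Pinv :=
        mul_le_mul_of_nonneg_right (colN_mul _ _) (colN_nonneg _)
    _ ≤ 5 * (3 / 5 : ℝ) ^ w.length * (3 / 5) := by
        refine mul_le_mul ?_ colN_Pinv (colN_nonneg _) (by positivity)
        exact mul_le_mul colN_P (key w) (colN_nonneg _) (by norm_num)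
    _ = 3 * (3 / 5 : ℝ) ^ w.length := by ring
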